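/- Let d ≤ n be positive integers and let 𝒜 be the family of subsets S of [n] satisfying monotonicity modulo d: for every i ∈ S with i > d, also i − d ∈ S. Then |𝒜| = ∏_{k=1}^{d} ⌊(n−k)/d + 2⌋, and this quantity is strictly greater than (n/d)^d. -/

import Mathlib

/-- A set `Y` is shattered by the family `F` if every subset of `Y`
is the trace of some member of `F` on `Y`. -/
def Shatters {α : Type*} [DecidableEq α] (F : Finset (Finset α)) (Y : Finset α) : Prop :=
  ∀ T ⊆ Y, ∃ S ∈ F, S ∩ Y = T

/-- The VC dimension of a family: the largest cardinality of a shattered set. -/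
noncomputable def vcDim {α : Type*} [DecidableEq α] (F : Finset (Finset α)) : ℕ :=
  sSup {m | ∃ Y : Finset α, Shatters F Y ∧ Y.card = m}

/-- `S₁ △ S₂ △ ⋯ △ S_k` for a `k`-tuple of sets. -/
def symmDiffAll {α : Type*} [DecidableEq α] {k : ℕ} (f : Fin k → Finset α) : Finset α :=
  (List.ofFn f).foldr symmDiff ∅

/-- The `k`-fold symmetric difference family `△𝒜^k`. -/
def symmDiffFam {α : Type*} [DecidableEq α] (k : ℕ) (A : Finset (Finset α)) :
    Finset (Finset α) :=
  (Fintype.piFinset fun _ : Fin k => A).image symmDiffAll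

/-- The family `𝒜₁ △ ⋯ △ 𝒜ₖ`. -/
def symmDiffFamMulti {α : Type*} [DecidableEq α] {k : ℕ} (A : Fin k → Finset (Finset α)) :
    Finset (Finset α) :=
  (Fintype.piFinset A).image symmDiffAll

/-- A family is `k`-wise `(n-d)`-union if any `k` of its members have union of size `≤ d`. -/
def KwiseUnion {α : Type*} [DecidableEq α] (k d : ℕ) (A : Finset (Finset α)) : Prop :=
  ∀ f : Fin k → Finset α, (∀ i, f i ∈ A) → (Finset.univ.sup f).card ≤ d

/-- The `i`-compression of a family. -/
def compress {α : Type*} [DecidableEq α] (i : α) (A : Finset (Finset α)) :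
    Finset (Finset α) :=
  A.image fun S => if S ∈ A ∧ S.erase i ∈ A then S else S.erase i

/-- The `(i,j)`-shift of a family. -/
def shiftIJ {α : Type*} [DecidableEq α] (i j : α) (A : Finset (Finset α)) :
    Finset (Finset α) :=
  A.image fun S => if i ∉ S ∧ j ∈ S ∧ insert i (S.erase j) ∉ A then insert i (S.erase j) else S

/-- `p(n,k,d)`: the maximum size of a `k`-wise `(n-d)`-union family on `[n]`. -/
noncomputable def pMax (n k d : ℕ) : ℕ :=
  sSup {m | ∃ F : Finset (Finset (Fin n)), KwiseUnion k d F ∧ F.card = m}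



open Finset

lemma dc_eq_range (t : Finset ℕ) (h : ∀ j, j + 1 ∈ t → j ∈ t) :
    t = Finset.range t.card := by
  have key : ∀ c a : ℕ, a + c ∈ t → a ∈ t := by
    intro c
    induction c with
    | zero => intro a ha; simpa using ha
    | succ c ih =>
        intro a ha
        refine ih a (h _ ?_)
        have he : a + (c + 1) = (a + c) + 1 := by omega
        rwa [he] at ha
  have hdown : ∀ a b : ℕ, a ≤ b → b ∈ t → a ∈ t := by
    intro a b hab hb
    obtain ⟨c, rfl⟩ := Nat.exists_eq_add_of_le hab
    exact key c a hb
  rcases t.eq_empty_or_nonempty with rfl | hne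
  · simp
  · set M := t.max' hne with hMdef
    have hM : M ∈ t := t.max'_mem hne
    have ht : t = Finset.range (M + 1) := by
      ext j
      simp only [Finset.mem_range, Nat.lt_succ_iff]
      exact ⟨fun hj => t.le_max' j hj, fun hj => hdown j M hj hM⟩
    rw [ht, Finset.card_range]

section
variable {n d : ℕ}

/-- decode -/
def dec (d : ℕ) (c : Fin d → ℕ) : Finset ℕ :=
  Finset.univ.biUnion fun k : Fin d => (Finset.range (c k)).image fun j => (k : ℕ) + 1 + j * d

lemma mem_dec {d : ℕ} {c : Fin d → ℕ} {i : ℕ} :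
    i ∈ dec d c ↔ ∃ k : Fin d, ∃ j, j < c k ∧ (k : ℕ) + 1 + j * d = i := by
  simp [dec, Finset.mem_biUnion, Finset.mem_image, Finset.mem_range]

lemma dec_inj {d : ℕ} {k k' : Fin d} {j j' : ℕ}
    (h : (k : ℕ) + 1 + j * d = (k' : ℕ) + 1 + j' * d) : k = k' ∧ j = j' := by
  have hd : 0 < d := k.pos
  have h' : (k : ℕ) + j * d = (k' : ℕ) + j' * d := by omega
  have hk : (k : ℕ) = (k' : ℕ) := by
    have := congrArg (· % d) h'
    simpa [Nat.add_mul_mod_self_right, Nat.mod_eq_of_lt k.2, Nat.mod_eq_of_lt k'.2] using this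
  refine ⟨Fin.ext hk, ?_⟩
  have hjj : j * d = j' * d := by omega
  exact Nat.eq_of_mul_eq_mul_right hd hjj

/-- encode -/
def enc (n d : ℕ) (S : Finset ℕ) : Fin d → ℕ :=
  fun k => ((Finset.range n).filter fun j => (k : ℕ) + 1 + j * d ∈ S).card

lemma enc_spec (hd : 0 < d) {S : Finset ℕ} (hS : S ⊆ Finset.Icc 1 n)
    (hmono : ∀ i ∈ S, d < i → i - d ∈ S) (k : Fin d) (j : ℕ) :
    (k : ℕ) + 1 + j * d ∈ S ↔ j < enc n d S k := by
  set t := (Finset.range n).filter fun j => (k : ℕ) + 1 + j * d ∈ S with htdef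
  have hmem : ∀ j, j ∈ t ↔ (k : ℕ) + 1 + j * d ∈ S := by
    intro j
    simp only [htdef, Finset.mem_filter, Finset.mem_range, and_iff_right_iff_imp]
    intro hj
    have hle : (k : ℕ) + 1 + j * d ≤ n := (Finset.mem_Icc.mp (hS hj)).2
    have : j ≤ j * d := Nat.le_mul_of_pos_right j hd
    omega
  have hdc : ∀ j, j + 1 ∈ t → j ∈ t := by
    intro j hj
    rw [hmem] at hj ⊢
    have hgt : d < (k : ℕ) + 1 + (j + 1) * d := by
      have : d ≤ (j + 1) * d := Nat.le_mul_of_pos_left d (Nat.succ_pos j)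
      omega
    have := hmono _ hj hgt
    have heq : (k : ℕ) + 1 + (j + 1) * d - d = (k : ℕ) + 1 + j * d := by
      have : (j + 1) * d = j * d + d := by ring
      omega
    rwa [heq] at this
  have ht : t = Finset.range t.card := dc_eq_range t hdc
  rw [← hmem, ht, Finset.mem_range]
  rfl

lemma enc_lt (hd : 0 < d) {S : Finset ℕ} (hS : S ⊆ Finset.Icc 1 n)
    (hmono : ∀ i ∈ S, d < i → i - d ∈ S) (k : Fin d) :
    enc n d S k < (n - ((k : ℕ) + 1)) / d + 2 := by
  by_contra hcon
  push_neg at hcon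
  have h1 : 0 < enc n d S k :=
    lt_of_lt_of_le (by norm_num) (le_trans (Nat.le_add_left 2 _) hcon)
  have h2 : enc n d S k - 1 < enc n d S k := Nat.sub_lt h1 Nat.one_pos
  have := (enc_spec hd hS hmono k (enc n d S k - 1)).mpr h2
  have hle : (k : ℕ) + 1 + (enc n d S k - 1) * d ≤ n := (Finset.mem_Icc.mp (hS this)).2
  have hmul : (enc n d S k - 1) * d ≤ n - ((k : ℕ) + 1) := by omega
  have h3 : enc n d S k - 1 ≤ (n - ((k : ℕ) + 1)) / d := (Nat.le_div_iff_mul_le hd).mpr hmul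
  omega

lemma dec_mem_fam (hd : 0 < d) (hdn : d ≤ n) {c : Fin d → ℕ}
    (hc : ∀ k, c k < (n - ((k : ℕ) + 1)) / d + 2) :
    dec d c ⊆ Finset.Icc 1 n ∧ ∀ i ∈ dec d c, d < i → i - d ∈ dec d c := by
  constructor
  · intro i hi
    obtain ⟨k, j, hj, rfl⟩ := mem_dec.mp hi
    have hjle : j ≤ (n - ((k : ℕ) + 1)) / d := by have := hc k; omega
    have hmul : j * d ≤ n - ((k : ℕ) + 1) := (Nat.le_div_iff_mul_le hd).mp hjle
    have : (k : ℕ) < d := k.2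
    rw [Finset.mem_Icc]
    omega
  · intro i hi hgt
    obtain ⟨k, j, hj, rfl⟩ := mem_dec.mp hi
    have hk : (k : ℕ) < d := k.2
    have hjpos : 0 < j := by
      by_contra h0
      push_neg at h0
      interval_cases j
      omega
    obtain ⟨j', rfl⟩ : ∃ j', j = j' + 1 := ⟨j - 1, by omega⟩
    refine mem_dec.mpr ⟨k, j', by omega, ?_⟩
    have : (j' + 1) * d = j' * d + d := by ring
    omega

lemma enc_dec (hd : 0 < d) (hdn : d ≤ n) {c : Fin d → ℕ}
    (hc : ∀ k, c k < (n - ((k : ℕ) + 1)) / d + 2) :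
    enc n d (dec d c) = c := by
  funext k
  show ((Finset.range n).filter fun j => (k : ℕ) + 1 + j * d ∈ dec d c).card = c k
  have : ((Finset.range n).filter fun j => (k : ℕ) + 1 + j * d ∈ dec d c)
      = Finset.range (c k) := by
    ext j
    simp only [Finset.mem_filter, Finset.mem_range, mem_dec]
    constructor
    · rintro ⟨hjn, k', j', hj', heq⟩
      obtain ⟨rfl, rfl⟩ := dec_inj heq
      exact hj'
    · intro hj
      have hjle : j ≤ (n - ((k : ℕ) + 1)) / d := by have := hc k; omega
      have hd1 : (n - ((k : ℕ) + 1)) / d ≤ n - ((k : ℕ) + 1) := Nat.div_le_self _ _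
      have hk : (k : ℕ) < d := k.2
      exact ⟨by omega, k, j, hj, rfl⟩
  rw [this, Finset.card_range]

lemma dec_enc (hd : 0 < d) {S : Finset ℕ} (hS : S ⊆ Finset.Icc 1 n)
    (hmono : ∀ i ∈ S, d < i → i - d ∈ S) :
    dec d (enc n d S) = S := by
  ext i
  rw [mem_dec]
  constructor
  · rintro ⟨k, j, hj, rfl⟩
    exact (enc_spec hd hS hmono k j).mpr hj
  · intro hi
    have hmem := Finset.mem_Icc.mp (hS hi)
    refine ⟨⟨(i - 1) % d, Nat.mod_lt _ hd⟩, (i - 1) / d, ?_, ?_⟩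
    · rw [← enc_spec hd hS hmono]
      have h1 : (i - 1) % d + (i - 1) / d * d = i - 1 := Nat.mod_add_div' (i - 1) d
      simpa only [show (i - 1) % d + 1 + (i - 1) / d * d = i by omega] using hi
    · have h1 : (i - 1) % d + (i - 1) / d * d = i - 1 := Nat.mod_add_div' (i - 1) d
      show (i - 1) % d + 1 + (i - 1) / d * d = i
      omega

end

/-- the family of subsets of `[n] = {1,…,n}` that are monotone modulo `d`
has size `∏_{k=1}^{d} (⌊(n−k)/d⌋ + 2)`, which is strictly greater than `(n/d)^d`. -/
theorem statement16 (n d : ℕ) (hd : 0 < d) (hdn : d ≤ n) :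
    ((Finset.Icc 1 n).powerset.filter
          (fun S : Finset ℕ => ∀ i ∈ S, d < i → i - d ∈ S)).card =
        ∏ k ∈ Finset.Icc 1 d, ((n - k) / d + 2) ∧
      ((n : ℝ) / (d : ℝ)) ^ d <
        ((∏ k ∈ Finset.Icc 1 d, ((n - k) / d + 2) : ℕ) : ℝ) := by
  have hprod : ∏ k ∈ Finset.Icc 1 d, ((n - k) / d + 2)
      = ∏ k : Fin d, ((n - ((k : ℕ) + 1)) / d + 2) := by
    rw [← Finset.Ico_add_one_right_eq_Icc, Finset.prod_Ico_eq_prod_range]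
    rw [← Fin.prod_univ_eq_prod_range (fun i => (n - (1 + i)) / d + 2)]
    refine Finset.prod_congr rfl fun k _ => ?_
    have h : 1 + (k : ℕ) = (k : ℕ) + 1 := by omega
    rw [h]
  constructor
  · have hA : ∀ S : Finset ℕ,
        S ∈ (Finset.Icc 1 n).powerset.filter
            (fun S : Finset ℕ => ∀ i ∈ S, d < i → i - d ∈ S)
          ↔ S ⊆ Finset.Icc 1 n ∧ ∀ i ∈ S, d < i → i - d ∈ S := by
      intro S
      simp [Finset.mem_filter, Finset.mem_powerset]
    have hcard : ((Finset.Icc 1 n).powerset.filter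
          (fun S : Finset ℕ => ∀ i ∈ S, d < i → i - d ∈ S)).card
        = (Fintype.piFinset fun k : Fin d =>
            Finset.range ((n - ((k : ℕ) + 1)) / d + 2)).card := by
      refine Finset.card_bij' (fun S _ => enc n d S) (fun c _ => dec d c) ?_ ?_ ?_ ?_
      · intro S hS
        obtain ⟨h1, h2⟩ := (hA S).mp hS
        rw [Fintype.mem_piFinset]
        intro k
        rw [Finset.mem_range]
        exact enc_lt hd h1 h2 k
      · intro c hc
        rw [hA]
        exact dec_mem_fam hd hdn fun k =>
          Finset.mem_range.mp (Fintype.mem_piFinset.mp hc k)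
      · intro S hS
        obtain ⟨h1, h2⟩ := (hA S).mp hS
        exact dec_enc hd h1 h2
      · intro c hc
        exact enc_dec hd hdn fun k =>
          Finset.mem_range.mp (Fintype.mem_piFinset.mp hc k)
    rw [hcard, Fintype.card_piFinset, hprod]
    simp [Finset.card_range]
  · have hkey : ∀ k ∈ Finset.Icc 1 d,
        ((n : ℝ) / (d : ℝ)) < (((n - k) / d + 2 : ℕ) : ℝ) := by
      intro k hk
      obtain ⟨hk1, hk2⟩ := Finset.mem_Icc.mp hk
      set q := (n - k) / d with hq
      have h0 := Nat.div_add_mod (n - k) d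
      rw [← hq] at h0
      have h1 := Nat.mod_lt (n - k) hd
      have hn : n < (q + 2) * d := by
        have he : (q + 2) * d = d * q + 2 * d := by ring
        omega
      rw [div_lt_iff₀ (by exact_mod_cast hd)]
      exact_mod_cast hn
    have hpos : (0 : ℝ) < (n : ℝ) / (d : ℝ) :=
      div_pos (by exact_mod_cast Nat.lt_of_lt_of_le hd hdn) (by exact_mod_cast hd)
    calc ((n : ℝ) / (d : ℝ)) ^ d
        = ∏ _k ∈ Finset.Icc 1 d, ((n : ℝ) / (d : ℝ)) := by
          rw [Finset.prod_const, Nat.card_Icc]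
          simp
      _ < ∏ k ∈ Finset.Icc 1 d, (((n - k) / d + 2 : ℕ) : ℝ) :=
          Finset.prod_lt_prod_of_nonempty (fun i _ => hpos) hkey
            ⟨1, Finset.mem_Icc.mpr ⟨le_refl 1, hd⟩⟩
      _ = ((∏ k ∈ Finset.Icc 1 d, ((n - k) / d + 2) : ℕ) : ℝ) :=
          (Nat.cast_prod _ _).symm
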